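/- The set Ω_r of tuples (g_1,...,g_r) ∈ F_q[T]^r with g_r ≠ 0 such that for ALL monic irreducible polynomials l ≠ T, either v_l(g_r) = 0 or v_l(g_r) ≥ p, has density 0 (its upper density is 0). -/

import Mathlib

open Polynomial UniqueFactorizationMonoid

lemma my_decomp {Fq : Type} [Field Fq] (f : Polynomial Fq) (hf : f ≠ 0)
    (H : ∀ l : Polynomial Fq, l.Monic → Irreducible l → l ≠ X → ¬ l ∣ f ∨ l ^ 2 ∣ f) :
    ∃ (c : Fq) (g h : Polynomial Fq), f = C c * g ^ 2 * h ∧ g.Monic ∧ h.Monic ∧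
      h.natDegree ≤ g.natDegree + 1 := by
  classical
  set F := normalizedFactors f with hF
  have hmonic : ∀ l ∈ F, (l : Polynomial Fq).Monic := by
    intro l hl
    have h1 := normalize_normalized_factor l hl
    have h2 : l ≠ 0 := (irreducible_of_normalized_factor l hl).ne_zero
    simpa [h1] using monic_normalize h2
  have hirr : ∀ l ∈ F, Irreducible l := fun l hl => irreducible_of_normalized_factor l hl
  have hcount : ∀ l ∈ F, l ≠ X → 2 ≤ F.count l := by
    intro l hl hlX
    have hldvd : l ∣ f := dvd_of_mem_normalizedFactors hl
    have hl2 : l ^ 2 ∣ f := by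
      rcases H l (hmonic l hl) (hirr l hl) hlX with h | h
      · exact absurd hldvd h
      · exact h
    have hl0 : l ≠ 0 := (hirr l hl).ne_zero
    have hle : normalizedFactors (l ^ 2) ≤ F :=
      (dvd_iff_normalizedFactors_le_normalizedFactors (pow_ne_zero 2 hl0) hf).1 hl2
    have hfac : normalizedFactors (l ^ 2) = Multiset.replicate 2 l := by
      rw [normalizedFactors_pow, normalizedFactors_irreducible (hirr l hl),
        normalize_normalized_factor l hl]
      rfl
    have := Multiset.count_le_of_le l hle
    rw [hfac, Multiset.count_replicate_self] at this
    exact this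
  set S := F.toFinset with hS
  set g : Polynomial Fq := ∏ l ∈ S, l ^ (F.count l / 2) with hg
  set h : Polynomial Fq := ∏ l ∈ S, l ^ (F.count l % 2) with hh
  have hgmonic : g.Monic :=
    monic_prod_of_monic _ _ fun l hl => (hmonic l (Multiset.mem_toFinset.1 hl)).pow _
  have hhmonic : h.Monic :=
    monic_prod_of_monic _ _ fun l hl => (hmonic l (Multiset.mem_toFinset.1 hl)).pow _
  have hprod : g ^ 2 * h = F.prod := by
    rw [Finset.prod_multiset_count, hg, hh, ← Finset.prod_pow, ← Finset.prod_mul_distrib]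
    refine Finset.prod_congr rfl fun l hl => ?_
    rw [← pow_mul, ← pow_add]
    congr 1
    omega
  obtain ⟨u, hu⟩ := (prod_normalizedFactors hf).symm
  obtain ⟨c, hcu, hcC⟩ := Polynomial.isUnit_iff.1 u⁻¹.isUnit
  refine ⟨c, g, h, ?_, hgmonic, hhmonic, ?_⟩
  · rw [mul_assoc, hcC, hprod, ← hu, mul_comm ((u⁻¹ : (Polynomial Fq)ˣ) : Polynomial Fq)]
    exact (Units.mul_inv_cancel_right f u).symm
  · have hdh : h.natDegree = ∑ l ∈ S, (F.count l % 2) * l.natDegree := by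
      rw [hh, natDegree_prod_of_monic _ _
        (fun l hl => (hmonic l (Multiset.mem_toFinset.1 hl)).pow _)]
      exact Finset.sum_congr rfl fun l _ => natDegree_pow l _
    have hdg : g.natDegree = ∑ l ∈ S, (F.count l / 2) * l.natDegree := by
      rw [hg, natDegree_prod_of_monic _ _
        (fun l hl => (hmonic l (Multiset.mem_toFinset.1 hl)).pow _)]
      exact Finset.sum_congr rfl fun l _ => natDegree_pow l _
    rw [hdh, hdg]
    by_cases hX : (X : Polynomial Fq) ∈ S
    · rw [← Finset.add_sum_erase _ _ hX, ← Finset.add_sum_erase _ (fun l => (F.count l / 2) * l.natDegree) hX]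
      have h1 : F.count X % 2 * (X : Polynomial Fq).natDegree ≤
          F.count X / 2 * (X : Polynomial Fq).natDegree + 1 := by
        rw [natDegree_X]; omega
      have h2 : ∑ l ∈ S.erase X, (F.count l % 2) * l.natDegree ≤
          ∑ l ∈ S.erase X, (F.count l / 2) * l.natDegree := by
        refine Finset.sum_le_sum fun l hl => ?_
        have hlX : l ≠ X := (Finset.mem_erase.1 hl).1
        have hc := hcount l (Multiset.mem_toFinset.1 (Finset.mem_erase.1 hl).2) hlX
        exact Nat.mul_le_mul_right _ (by omega)
      omega
    · refine le_trans (Finset.sum_le_sum fun l hl => ?_) (Nat.le_succ _)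
      have hlX : l ≠ X := fun e => hX (e ▸ hl)
      have hc := hcount l (Multiset.mem_toFinset.1 hl) hlX
      exact Nat.mul_le_mul_right _ (by omega)

lemma my_decomp2 {Fq : Type} [Field Fq] (N : ℕ) (f : Polynomial Fq) (hf : f ≠ 0)
    (hdeg : f.degree < (N : ℕ))
    (H : ∀ l : Polynomial Fq, l.Monic → Irreducible l → l ≠ X → ¬ l ∣ f ∨ l ^ 2 ∣ f) :
    ∃ (c : Fq) (g h : Polynomial Fq), f = C c * g ^ 2 * h ∧
      g.degree < ((N / 2 + 1 : ℕ) : WithBot ℕ) ∧ h.degree < ((N / 3 + 2 : ℕ) : WithBot ℕ) := by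
  obtain ⟨c, g, h, hfeq, hgm, hhm, hdh⟩ := my_decomp f hf H
  have hc : c ≠ 0 := by
    rintro rfl
    simp at hfeq
    exact hf hfeq
  have hm : f.natDegree < N := (natDegree_lt_iff_degree_lt hf).2 hdeg
  have hnd : f.natDegree = 2 * g.natDegree + h.natDegree := by
    rw [hfeq, mul_assoc, natDegree_C_mul hc, (hgm.pow 2).natDegree_mul hhm, natDegree_pow]
  refine ⟨c, g, h, hfeq, ?_, ?_⟩
  · exact (natDegree_lt_iff_degree_lt hgm.ne_zero).1 (by omega)
  · exact (natDegree_lt_iff_degree_lt hhm.ne_zero).1 (by omega)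

lemma my_card_degLT (Fq : Type) [Field Fq] [Fintype Fq] (M : ℕ) :
    Nat.card {f : Polynomial Fq // f.degree < (M : ℕ)} = Fintype.card Fq ^ M := by
  have e : {f : Polynomial Fq // f.degree < (M : ℕ)} ≃ (Fin M → Fq) :=
    (Equiv.subtypeEquivRight fun f => (Polynomial.mem_degreeLT).symm).trans
      (Polynomial.degreeLTEquiv Fq M).toEquiv
  rw [Nat.card_congr e, Nat.card_eq_fintype_card, Fintype.card_fun, Fintype.card_fin]

lemma my_finite_degLT (Fq : Type) [Field Fq] [Fintype Fq] (M : ℕ) :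
    Finite {f : Polynomial Fq // f.degree < (M : ℕ)} := by
  have e : {f : Polynomial Fq // f.degree < (M : ℕ)} ≃ (Fin M → Fq) :=
    (Equiv.subtypeEquivRight fun f => (Polynomial.mem_degreeLT).symm).trans
      (Polynomial.degreeLTEquiv Fq M).toEquiv
  exact Finite.of_equiv _ e.symm

lemma my_key {Fq : Type} [Field Fq] [Fintype Fq] (p : ℕ) (hp2 : 2 ≤ p)
    (r : ℕ) (hr : 2 ≤ r) (N : ℕ) :
    Nat.card {g : Fin r → Polynomial Fq //
        g ⟨r - 1, by omega⟩ ≠ 0 ∧ (∀ i, (g i).degree < (N : ℕ)) ∧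
        ∀ l : Polynomial Fq, l.Monic → Irreducible l → l ≠ Polynomial.X →
          (¬ l ∣ g ⟨r - 1, by omega⟩ ∨ l ^ p ∣ g ⟨r - 1, by omega⟩)}
      ≤ Fintype.card Fq ^ ((r - 1) * N) *
        (Fintype.card Fq * (Fintype.card Fq ^ (N / 2 + 1) * Fintype.card Fq ^ (N / 3 + 2))) := by
  classical
  set q := Fintype.card Fq
  let A := {f : Polynomial Fq // f.degree < (N : ℕ)}
  let G := {f : Polynomial Fq // f.degree < ((N / 2 + 1 : ℕ) : WithBot ℕ)}
  let Hh := {f : Polynomial Fq // f.degree < ((N / 3 + 2 : ℕ) : WithBot ℕ)}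
  haveI := my_finite_degLT Fq N
  haveI := my_finite_degLT Fq (N / 2 + 1)
  haveI := my_finite_degLT Fq (N / 3 + 2)
  set Dom := {g : Fin r → Polynomial Fq //
        g ⟨r - 1, by omega⟩ ≠ 0 ∧ (∀ i, (g i).degree < (N : ℕ)) ∧
        ∀ l : Polynomial Fq, l.Monic → Irreducible l → l ≠ Polynomial.X →
          (¬ l ∣ g ⟨r - 1, by omega⟩ ∨ l ^ p ∣ g ⟨r - 1, by omega⟩)} with hDom
  have dec : ∀ x : Dom, ∃ t : Fq × G × Hh,
      x.1 ⟨r - 1, by omega⟩ = C t.1 * (t.2.1 : Polynomial Fq) ^ 2 * (t.2.2 : Polynomial Fq) := by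
    rintro ⟨x, hx0, hxdeg, hxcond⟩
    obtain ⟨c, g, h, heq, hg, hh⟩ := my_decomp2 N _ hx0 (hxdeg _) (fun l hm hi hX => by
      rcases hxcond l hm hi hX with h | h
      · exact Or.inl h
      · exact Or.inr ((pow_dvd_pow l hp2).trans h))
    exact ⟨⟨c, ⟨g, hg⟩, ⟨h, hh⟩⟩, heq⟩
  let Φ : Dom → (Fin (r - 1) → A) × (Fq × G × Hh) := fun x =>
    (fun i => ⟨x.1 (Fin.castLE (by omega) i), x.2.2.1 _⟩, (dec x).choose)
  have hΦ : Function.Injective Φ := by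
    intro x y hxy
    have h1 : ∀ i : Fin (r - 1),
        x.1 (Fin.castLE (by omega) i) = y.1 (Fin.castLE (by omega) i) := by
      intro i
      have := congrFun (congrArg Prod.fst hxy) i
      exact Subtype.ext_iff.1 this
    have h2 : x.1 ⟨r - 1, by omega⟩ = y.1 ⟨r - 1, by omega⟩ := by
      have hsnd : (dec x).choose = (dec y).choose := congrArg Prod.snd hxy
      rw [(dec x).choose_spec, (dec y).choose_spec, hsnd]
    refine Subtype.ext (funext fun i => ?_)
    by_cases hi : (i : ℕ) < r - 1
    · have := h1 ⟨i, hi⟩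
      have hcast : Fin.castLE (show r - 1 ≤ r by omega) ⟨(i : ℕ), hi⟩ = i := by
        apply Fin.ext; rfl
      rwa [hcast] at this
    · have : i = (⟨r - 1, by omega⟩ : Fin r) := by
        apply Fin.ext
        have := i.isLt
        simp only []
        omega
      rw [this]
      exact h2
  have hcard := Nat.card_le_card_of_injective Φ hΦ
  rw [Nat.card_prod, Nat.card_fun, Nat.card_prod, Nat.card_prod, my_card_degLT, my_card_degLT,
    my_card_degLT, Nat.card_eq_fintype_card (α := Fq),
    Nat.card_eq_fintype_card (α := Fin (r - 1)), Fintype.card_fin] at hcard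
  calc Nat.card Dom ≤ (q ^ N) ^ (r - 1) * (q * (q ^ (N / 2 + 1) * q ^ (N / 3 + 2))) := hcard
    _ = q ^ ((r - 1) * N) * (q * (q ^ (N / 2 + 1) * q ^ (N / 3 + 2))) := by
        rw [← pow_mul, mul_comm (r-1) N, mul_comm N (r-1)]

/-- The set Ω_r of tuples (g_1,...,g_r) ∈ F_q[T]^r with g_r ≠ 0 such that
for ALL monic irreducibles l ≠ T, v_l(g_r) = 0 (l ∤ g_r) or v_l(g_r) ≥ p (l^p ∣ g_r),
has density 0: the counting ratio tends to 0. -/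
theorem stmt_12 (p : ℕ) (hp : p.Prime) (q n : ℕ) (hn : 0 < n) (hq : q = p ^ n)
    (Fq : Type) [Field Fq] [Fintype Fq] (hcard : Fintype.card Fq = q)
    (r : ℕ) (hr : 2 ≤ r) :
    Filter.Tendsto
      (fun N : ℕ =>
        (Nat.card {g : Fin r → Polynomial Fq //
            g ⟨r - 1, by omega⟩ ≠ 0 ∧ (∀ i, (g i).degree < (N : ℕ)) ∧
            ∀ l : Polynomial Fq, l.Monic → Irreducible l → l ≠ Polynomial.X →
              (¬ l ∣ g ⟨r - 1, by omega⟩ ∨ l ^ p ∣ g ⟨r - 1, by omega⟩)} : ℝ) /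
          ((q : ℝ) ^ (r * N) - (q : ℝ) ^ ((r - 1) * N)))
      Filter.atTop (nhds 0) := by
  have hq2 : 2 ≤ q := by
    rw [hq]
    calc 2 ≤ p := hp.two_le
      _ ≤ p ^ n := Nat.le_self_pow hn.ne' p
  have hQ2 : (2 : ℝ) ≤ (q : ℝ) := by exact_mod_cast hq2
  have hQ1 : (1 : ℝ) ≤ (q : ℝ) := by linarith
  have hQ0 : (0 : ℝ) < (q : ℝ) := by linarith
  have hB : Filter.Tendsto (fun N : ℕ => 2 * (q : ℝ) ^ 4 * ((q : ℝ)⁻¹) ^ (N / 6))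
      Filter.atTop (nhds 0) := by
    have h1 : Filter.Tendsto (fun N : ℕ => N / 6) Filter.atTop Filter.atTop :=
      Filter.tendsto_atTop_atTop.2 fun b => ⟨6 * b, fun m hm => by omega⟩
    have h2 : Filter.Tendsto (fun k : ℕ => ((q : ℝ)⁻¹) ^ k) Filter.atTop (nhds 0) :=
      tendsto_pow_atTop_nhds_zero_of_lt_one (by positivity)
        (by rw [inv_lt_one_iff₀]; right; linarith)
    have := (h2.comp h1).const_mul (2 * (q : ℝ) ^ 4)
    simpa [Function.comp] using this
  refine tendsto_of_tendsto_of_tendsto_of_le_of_le' tendsto_const_nhds hB ?_ ?_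
  · filter_upwards with N
    apply div_nonneg (Nat.cast_nonneg _)
    have : (q : ℝ) ^ ((r - 1) * N) ≤ (q : ℝ) ^ (r * N) :=
      pow_le_pow_right₀ hQ1 (Nat.mul_le_mul_right N (by omega))
    linarith
  · filter_upwards [Filter.eventually_ge_atTop 1] with N hN1
    have hkey := my_key (Fq := Fq) p hp.two_le r hr N
    rw [hcard] at hkey
    have hkeyR := (Nat.cast_le (α := ℝ)).2 hkey
    push_cast at hkeyR
    clear hkey
    have hQN2 : (2 : ℝ) ≤ (q : ℝ) ^ N := le_trans hQ2 (le_self_pow₀ hQ1 (by omega))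
    have hDeq : (q : ℝ) ^ (r * N) - (q : ℝ) ^ ((r - 1) * N)
        = (q : ℝ) ^ ((r - 1) * N) * ((q : ℝ) ^ N - 1) := by
      obtain ⟨k, rfl⟩ : ∃ k, r = k + 1 := ⟨r - 1, by omega⟩
      rw [mul_sub, mul_one, ← pow_add]
      congr 2
      simp [Nat.succ_mul]
    have hD0 : (0 : ℝ) < (q : ℝ) ^ (r * N) - (q : ℝ) ^ ((r - 1) * N) := by
      rw [hDeq]
      have : (0:ℝ) < (q : ℝ) ^ ((r - 1) * N) := by positivity
      nlinarith
    rw [div_le_iff₀ hD0]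
    have step : (q : ℝ) * ((q : ℝ) ^ (N / 2 + 1) * (q : ℝ) ^ (N / 3 + 2)) * (q : ℝ) ^ (N / 6)
        ≤ 2 * (q : ℝ) ^ 4 * ((q : ℝ) ^ N - 1) := by
      have l1 : (q : ℝ) * ((q : ℝ) ^ (N / 2 + 1) * (q : ℝ) ^ (N / 3 + 2)) * (q : ℝ) ^ (N / 6)
          = (q : ℝ) ^ (1 + (N / 2 + 1) + (N / 3 + 2) + N / 6) := by
        simp only [pow_add, pow_one]
        ring
      have l2 : (q : ℝ) ^ (1 + (N / 2 + 1) + (N / 3 + 2) + N / 6) ≤ (q : ℝ) ^ (N + 4) :=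
        pow_le_pow_right₀ hQ1 (by omega)
      have l3 : (q : ℝ) ^ (N + 4) = (q : ℝ) ^ 4 * (q : ℝ) ^ N := by
        rw [pow_add]; ring
      have l4 : (q : ℝ) ^ 4 * (q : ℝ) ^ N ≤ (q : ℝ) ^ 4 * (2 * ((q : ℝ) ^ N - 1)) := by
        have : (0:ℝ) ≤ (q : ℝ) ^ 4 := by positivity
        nlinarith
      calc (q : ℝ) * ((q : ℝ) ^ (N / 2 + 1) * (q : ℝ) ^ (N / 3 + 2)) * (q : ℝ) ^ (N / 6)
          = (q : ℝ) ^ (1 + (N / 2 + 1) + (N / 3 + 2) + N / 6) := l1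
        _ ≤ (q : ℝ) ^ (N + 4) := l2
        _ = (q : ℝ) ^ 4 * (q : ℝ) ^ N := l3
        _ ≤ (q : ℝ) ^ 4 * (2 * ((q : ℝ) ^ N - 1)) := l4
        _ = 2 * (q : ℝ) ^ 4 * ((q : ℝ) ^ N - 1) := by ring
    refine le_trans hkeyR ?_
    rw [hDeq]
    have hpow6 : (0 : ℝ) < (q : ℝ) ^ (N / 6) := by positivity
    have inner : (q : ℝ) * ((q : ℝ) ^ (N / 2 + 1) * (q : ℝ) ^ (N / 3 + 2))
        ≤ 2 * (q : ℝ) ^ 4 * ((q : ℝ) ^ N - 1) / (q : ℝ) ^ (N / 6) :=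
      (le_div_iff₀ hpow6).2 step
    calc (q : ℝ) ^ ((r - 1) * N) * ((q : ℝ) * ((q : ℝ) ^ (N / 2 + 1) * (q : ℝ) ^ (N / 3 + 2)))
        ≤ (q : ℝ) ^ ((r - 1) * N) *
          (2 * (q : ℝ) ^ 4 * ((q : ℝ) ^ N - 1) / (q : ℝ) ^ (N / 6)) := by
          apply mul_le_mul_of_nonneg_left inner (by positivity)
      _ = 2 * (q : ℝ) ^ 4 * ((q : ℝ)⁻¹) ^ (N / 6) *
          ((q : ℝ) ^ ((r - 1) * N) * ((q : ℝ) ^ N - 1)) := by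
          rw [inv_pow]
          field_simp
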